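/- arXiv:0804.3671 — 2 statements merged into one kernel-verified Lean document; each statement's English description precedes it below -/
import Mathlib

section
/- The decomposition along occurrences is unambiguous: for every word T over α in which w occurs at least once, there exist a unique r ∈ R(w), a unique u ∈ U(w), and a unique finite list ℓ = (m₁, …, m_s) of words, each belonging to M(w), such that T = r ++ m₁ ++ ⋯ ++ m_s ++ u. -/
/-- Elementwise concatenation of two languages: `L₁·L₂`. -/
def lconc {α : Type*} (L₁ L₂ : Set (List α)) : Set (List α) :=
  {x | ∃ a ∈ L₁, ∃ b ∈ L₂, x = a ++ b}

/-- Kleene star of a language: all finite concatenations of its elements. -/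
def lstar {α : Type*} (L : Set (List α)) : Set (List α) :=
  {x | ∃ S : List (List α), (∀ y ∈ S, y ∈ L) ∧ x = S.flatten}

/-- `A⁺`: the set of nonempty words. -/
def Aplus (α : Type*) : Set (List α) := {x : List α | x ≠ []}

/-- `w` occurs at position `i` in `T`. -/
def occursAt {α : Type*} (w T : List α) (i : ℕ) : Prop :=
  ∃ x y : List α, T = x ++ w ++ y ∧ x.length = i

/-- The autocorrelation set `C(w)`. -/
def Corr {α : Type*} (w : List α) : Set (List α) :=
  {c | c.length < w.length ∧ ∃ e, w ++ c = e ++ w}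

/-- `C∘(w) = C(w) \ {[]}`. -/
def CorrPos {α : Type*} (w : List α) : Set (List α) := Corr w \ {[]}

/-- The prefix code `K(w) = C∘(w) \ C∘(w)·A⁺`. -/
def KCode {α : Type*} (w : List α) : Set (List α) :=
  CorrPos w \ lconc (CorrPos w) (Aplus α)

/-- The minimal language `M(w)`: nonempty words `m` such that `w ++ m` ends with `w`
and every occurrence of `w` in `w ++ m` is at position `0` or at position `|m|`. -/
def MinLang {α : Type*} (w : List α) : Set (List α) :=
  {m | m ≠ [] ∧ (∃ e, w ++ m = e ++ w) ∧
    ∀ i, occursAt w (w ++ m) i → i = 0 ∨ i = m.length}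

/-- The "Right" language `R(w)`: words in which `w` occurs exactly once,
at the right extremity. -/
def RightLang {α : Type*} (w : List α) : Set (List α) :=
  {r | occursAt w r (r.length - w.length) ∧
    ∀ i, occursAt w r i → i = r.length - w.length}

/-- The "Ultimate" language `U(w)`: words `u` such that the only occurrence of `w`
in `w ++ u` is at position `0`. -/
def UltLang {α : Type*} (w : List α) : Set (List α) :=
  {u | ∀ i, occursAt w (w ++ u) i → i = 0}

/-- The "Not" language `N(w)`: words with no occurrence of `w`. -/
def NotLang {α : Type*} (w : List α) : Set (List α) :=
  {t | ∀ i, ¬ occursAt w t i}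

section Aux
variable {α : Type*}

lemma occ_length {w T : List α} {i : ℕ} (h : occursAt w T i) :
    i + w.length ≤ T.length := by
  obtain ⟨x, y, rfl, hx⟩ := h
  simp [← hx]

lemma occ_append_right {w P : List α} (S : List α) {i : ℕ} (h : occursAt w P i) :
    occursAt w (P ++ S) i := by
  obtain ⟨x, y, rfl, hx⟩ := h
  exact ⟨x, y ++ S, by simp, hx⟩

lemma occ_of_prefix {w P T : List α} {i : ℕ} (h : occursAt w T i)
    (hP : P <+: T) (hik : i + w.length ≤ P.length) : occursAt w P i := by
  obtain ⟨x, y, hxy, hx⟩ := h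
  have h1 : x ++ w <+: T := ⟨y, by rw [hxy, List.append_assoc]⟩
  have h2 : x ++ w <+: P :=
    List.prefix_of_prefix_length_le h1 hP (by simp [hx]; omega)
  obtain ⟨y', hy'⟩ := h2
  exact ⟨x, y', by rw [← hy', List.append_assoc], hx⟩

lemma M_e_length {w m e : List α} (h : w ++ m = e ++ w) : e.length = m.length := by
  have := congrArg List.length h; simp at this; omega

lemma u_no_m_prefix {w m u : List α} (hm : m ∈ MinLang w) (hu : u ∈ UltLang w)
    (v : List α) : u ≠ m ++ v := by
  rintro rfl
  obtain ⟨hne, ⟨e, he⟩, -⟩ := hm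
  have hocc : occursAt w (w ++ (m ++ v)) m.length := by
    refine ⟨e, v, ?_, M_e_length he⟩
    rw [← List.append_assoc, he, List.append_assoc]
  have h0 := hu _ hocc
  exact hne (List.length_eq_zero_iff.mp h0)

lemma m_eq_of_le {w m₁ m₂ a b : List α} (hm₁ : m₁ ∈ MinLang w) (hm₂ : m₂ ∈ MinLang w)
    (hle : m₁.length ≤ m₂.length) (heq : m₁ ++ a = m₂ ++ b) : m₁ = m₂ := by
  have hpre : m₁ <+: m₂ :=
    List.prefix_of_prefix_length_le ⟨a, rfl⟩ ⟨b, heq.symm⟩ hle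
  obtain ⟨d, rfl⟩ := hpre
  obtain ⟨hne₁, ⟨e₁, he₁⟩, -⟩ := hm₁
  obtain ⟨-, -, hocc₂⟩ := hm₂
  have hocc : occursAt w (w ++ (m₁ ++ d)) m₁.length :=
    ⟨e₁, d, by rw [← List.append_assoc, he₁, List.append_assoc], M_e_length he₁⟩
  rcases hocc₂ _ hocc with h0 | hlen
  · exact absurd (List.length_eq_zero_iff.mp h0) hne₁
  · have hd : d = [] := by
      simp only [List.length_append] at hlen
      have : d.length = 0 := by omega
      exact List.length_eq_zero_iff.mp this
    simp [hd]

lemma uniq_lu {w : List α} : ∀ (l₁ : List (List α)) (u₁ : List α)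
    (l₂ : List (List α)) (u₂ : List α),
    (∀ m ∈ l₁, m ∈ MinLang w) → u₁ ∈ UltLang w →
    (∀ m ∈ l₂, m ∈ MinLang w) → u₂ ∈ UltLang w →
    l₁.flatten ++ u₁ = l₂.flatten ++ u₂ → l₁ = l₂ ∧ u₁ = u₂ := by
  intro l₁
  induction l₁ with
  | nil =>
    intro u₁ l₂ u₂ _ hu₁ hl₂ hu₂ heq
    cases l₂ with
    | nil => simpa using heq
    | cons m t =>
      exact absurd (by simpa [List.append_assoc] using heq)
        (u_no_m_prefix (hl₂ m (by simp)) hu₁ (t.flatten ++ u₂))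
  | cons m₁ t₁ ih =>
    intro u₁ l₂ u₂ hl₁ hu₁ hl₂ hu₂ heq
    cases l₂ with
    | nil =>
      exact absurd (by simpa [List.append_assoc] using heq.symm)
        (u_no_m_prefix (hl₁ m₁ (by simp)) hu₂ (t₁.flatten ++ u₁))
    | cons m₂ t₂ =>
      have hm₁ := hl₁ m₁ (by simp)
      have hm₂ := hl₂ m₂ (by simp)
      have hm : m₁ = m₂ := by
        rcases le_total m₁.length m₂.length with h | h
        · exact m_eq_of_le hm₁ hm₂ h (by simpa [List.append_assoc] using heq)
        · exact (m_eq_of_le hm₂ hm₁ h (by simpa [List.append_assoc] using heq.symm)).symm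
      subst hm
      have heq' : t₁.flatten ++ u₁ = t₂.flatten ++ u₂ := by
        apply List.append_cancel_left (as := m₁)
        simpa [List.append_assoc] using heq
      obtain ⟨h1, h2⟩ := ih u₁ t₂ u₂ (fun m hm => hl₁ m (by simp [hm])) hu₁
        (fun m hm => hl₂ m (by simp [hm])) hu₂ heq'
      exact ⟨by rw [h1], h2⟩

lemma exU (w : List α) (z : List α) :
    ∃ (l : List (List α)) (u : List α), (∀ m ∈ l, m ∈ MinLang w) ∧ u ∈ UltLang w ∧ z = l.flatten ++ u := by
  classical
  obtain ⟨n, hn⟩ : ∃ n, z.length ≤ n := ⟨z.length, le_rfl⟩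
  induction n generalizing z with
  | zero =>
    refine ⟨[], z, by simp, ?_, by simp⟩
    intro i hi
    have := occ_length hi
    have hz : z.length = 0 := by omega
    simp [hz] at this
    omega
  | succ n ih =>
    by_cases h : ∃ i, 0 < i ∧ occursAt w (w ++ z) i
    · set q := Nat.find h with hq
      obtain ⟨hq0, hqocc⟩ := Nat.find_spec h
      have hqz : q ≤ z.length := by
        have := occ_length hqocc; simp at this; omega
      set m := z.take q with hm
      set z' := z.drop q with hz'
      have hzz : z = m ++ z' := (List.take_append_drop q z).symm
      have hml : m.length = q := by simp [hm]; omega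
      obtain ⟨x, y, hxy, hx⟩ := hqocc
      have hwm : w ++ m = x ++ w := by
        have h1 : w ++ m <+: w ++ z := ⟨z', by rw [hzz, List.append_assoc]⟩
        have h2 : x ++ w <+: w ++ z := ⟨y, by rw [hxy, List.append_assoc]⟩
        have hlen : (w ++ m).length = (x ++ w).length := by simp [hml, hx]; omega
        exact (List.prefix_of_prefix_length_le h1 h2 (le_of_eq hlen)).eq_of_length hlen
      have hmM : m ∈ MinLang w := by
        refine ⟨?_, ⟨x, hwm⟩, ?_⟩
        · intro hnil; rw [hnil] at hml; simp at hml; omega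
        · intro i hi
          have hiz : occursAt w (w ++ z) i := by
            have := occ_append_right z' hi
            rwa [List.append_assoc, ← hzz] at this
          have hil : i + w.length ≤ w.length + m.length := by
            have := occ_length hi; simpa using this
          by_cases h0 : i = 0
          · exact Or.inl h0
          · right
            have hqi : q ≤ i := by
              by_contra hlt
              exact Nat.find_min h (by omega) ⟨Nat.pos_of_ne_zero h0, hiz⟩
            omega
      have hz'n : z'.length ≤ n := by simp [hz']; omega
      obtain ⟨l', u, hl', hu, hzu⟩ := ih z' hz'n
      refine ⟨m :: l', u, ?_, hu, by rw [hzz, hzu]; simp [List.append_assoc]⟩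
      intro mm hmm
      rcases List.mem_cons.mp hmm with h' | h'
      · exact h' ▸ hmM
      · exact hl' mm h'
    · refine ⟨[], z, by simp, ?_, by simp⟩
      intro i hi
      by_contra h0
      exact h ⟨i, Nat.pos_of_ne_zero h0, hi⟩

lemma right_eq_of_le {w r₁ r₂ : List α} (h₁ : r₁ ∈ RightLang w) (h₂ : r₂ ∈ RightLang w)
    (hle : r₁.length ≤ r₂.length) (hpre : r₁ <+: r₂) : r₁ = r₂ := by
  obtain ⟨d, rfl⟩ := hpre
  have hocc₁ := h₁.1
  have hw₁ : w.length ≤ r₁.length := le_trans (by omega) (occ_length hocc₁)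
  have hocc₂ : occursAt w (r₁ ++ d) (r₁.length - w.length) := occ_append_right d hocc₁
  have heq := h₂.2 _ hocc₂
  simp only [List.length_append] at heq
  have hd : d = [] := List.length_eq_zero_iff.mp (by omega)
  simp [hd]

end Aux

/-- every text containing `w` has a unique decomposition
`T = r ++ m₁ ++ ⋯ ++ m_s ++ u` with `r ∈ R(w)`, each `m_i ∈ M(w)`, `u ∈ U(w)`. -/
theorem decomposition_unique {α : Type*} (w : List α) (hw : w ≠ [])
    (T : List α) (hT : ∃ i, occursAt w T i) :
    ∃! rlu : List α × List (List α) × List α,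
      rlu.1 ∈ RightLang w ∧ (∀ m ∈ rlu.2.1, m ∈ MinLang w) ∧
      rlu.2.2 ∈ UltLang w ∧ T = rlu.1 ++ rlu.2.1.flatten ++ rlu.2.2 := by
  classical
  set p := Nat.find hT with hp
  have hpocc : occursAt w T p := Nat.find_spec hT
  have hpl : p + w.length ≤ T.length := occ_length hpocc
  set r := T.take (p + w.length) with hr
  set z := T.drop (p + w.length) with hz
  have hTz : T = r ++ z := (List.take_append_drop _ T).symm
  have hrl : r.length = p + w.length := by simp [hr]; omega
  have hrR : r ∈ RightLang w := by
    constructor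
    · have hocc : occursAt w r p :=
        occ_of_prefix hpocc ⟨z, hTz.symm⟩ (by omega)
      have : r.length - w.length = p := by omega
      rwa [this]
    · intro i hi
      have hiT : occursAt w T i := by rw [hTz]; exact occ_append_right z hi
      have h1 : p ≤ i := Nat.find_min' hT hiT
      have h2 := occ_length hi
      omega
  obtain ⟨l, u, hlM, huU, hzlu⟩ := exU w z
  refine ⟨(r, l, u), ⟨hrR, hlM, huU, by rw [hTz, hzlu, List.append_assoc]⟩, ?_⟩
  rintro ⟨r', l', u'⟩ ⟨hr'R, hl'M, hu'U, hT'⟩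
  have hT'' : T = r' ++ (l'.flatten ++ u') := by rw [hT', List.append_assoc]
  have hTr : T = r ++ (l.flatten ++ u) := by rw [hTz, hzlu]
  have hre : r' = r := by
    have hpre1 : r' <+: T := ⟨_, hT''.symm⟩
    have hpre2 : r <+: T := ⟨_, hTr.symm⟩
    rcases le_total r'.length r.length with hle | hle
    · exact right_eq_of_le hr'R hrR hle (List.prefix_of_prefix_length_le hpre1 hpre2 hle)
    · exact (right_eq_of_le hrR hr'R hle (List.prefix_of_prefix_length_le hpre2 hpre1 hle)).symm
  subst hre
  have hcanc : l'.flatten ++ u' = l.flatten ++ u :=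
    List.append_cancel_left (hT''.symm.trans hTr)
  obtain ⟨hle, hue⟩ := uniq_lu l' u' l u hl'M hu'U hlM huU hcanc
  simp [hle, hue]
end

section
/- Characterization of clumps of a single word: a word v is a clustering-word for w (i.e., w occurs in v, and for every pair of consecutive positions i, i+1 of v there is a common occurrence of w in v covering both) if and only if v ∈ {w}·(C∘(w))*, i.e., v = w ++ c₁ ++ ⋯ ++ c_m for some (possibly empty) sequence of words c₁, …, c_m in C∘(w). -/
lemma occ_len {α : Type*} {w T : List α} {j : ℕ} (h : occursAt w T j) :
    j + w.length ≤ T.length := by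
  obtain ⟨x, y, hT, hx⟩ := h
  subst hT
  simp only [List.length_append]
  omega

lemma occ_append_right_s11 {α : Type*} {w T : List α} {j : ℕ} (c : List α)
    (h : occursAt w T j) : occursAt w (T ++ c) j := by
  obtain ⟨x, y, hT, hx⟩ := h
  exact ⟨x, y ++ c, by simp [hT], hx⟩

lemma occ_prefix {α : Type*} {w T c : List α} {j : ℕ}
    (h : occursAt w (T ++ c) j) (hle : j + w.length ≤ T.length) :
    occursAt w T j := by
  obtain ⟨x, y, hT, hx⟩ := h
  have h1 : (x ++ w) <+: T :=
    List.prefix_of_prefix_length_le ⟨y, by rw [hT]⟩ ⟨c, rfl⟩ (by simp [hx]; omega)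
  obtain ⟨y', hy'⟩ := h1
  exact ⟨x, y', by rw [← hy'], hx⟩

lemma fwd_main {α : Type*} (w : List α) (hw : w ≠ []) :
    ∀ n (v : List α), v.length ≤ n →
    (∃ u, v = u ++ w) →
    (∀ j, occursAt w v j → 0 < j →
      ∃ q, occursAt w v q ∧ q < j ∧ j < q + w.length) →
    ∃ S : List (List α), (∀ c ∈ S, c ∈ CorrPos w) ∧ v = w ++ S.flatten := by
  have hwlen : 0 < w.length := List.length_pos_iff.mpr hw
  intro n
  induction n with
  | zero =>
    rintro v hv ⟨u, rfl⟩ _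
    exfalso
    simp only [List.length_append] at hv
    omega
  | succ n ih =>
    rintro v hv ⟨u, hu⟩ hinv
    by_cases hu0 : u = []
    · exact ⟨[], by simp, by simp [hu, hu0]⟩
    · have hupos : 0 < u.length := List.length_pos_iff.mpr hu0
      have hj : occursAt w v u.length := ⟨u, [], by simp [hu], rfl⟩
      obtain ⟨q, hqo, hqlt, hqgt⟩ := hinv u.length hj hupos
      obtain ⟨x, y, hv2, hx⟩ := hqo
      have hvlen : v.length = u.length + w.length := by simp [hu]
      have hvlen2 : v.length = q + w.length + y.length := by
        simp [hv2]; omega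
      have hxu : x <+: u :=
        List.prefix_of_prefix_length_le ⟨w ++ y, by rw [hv2]; simp⟩
          ⟨w, hu.symm⟩ (by omega)
      obtain ⟨e, he⟩ := hxu
      have hwy : w ++ y = e ++ w := by
        have h2 : x ++ (e ++ w) = x ++ (w ++ y) := by
          rw [← List.append_assoc, he, ← hu, hv2]; simp
        exact (List.append_cancel_left h2).symm
      have hylen : y.length = u.length - q := by omega
      have hy_corr : y ∈ CorrPos w := by
        refine ⟨⟨by omega, e, hwy⟩, ?_⟩
        simp only [Set.mem_singleton_iff]
        intro h
        rw [h] at hylen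
        simp at hylen
        omega
      have hvdef : v = (x ++ w) ++ y := hv2
      have hv'len : (x ++ w).length = q + w.length := by simp [hx]
      have hinv' : ∀ p, occursAt w (x ++ w) p → 0 < p →
          ∃ q', occursAt w (x ++ w) q' ∧ q' < p ∧ p < q' + w.length := by
        intro p hp hppos
        have hpv : occursAt w v p := by
          rw [hvdef]; exact occ_append_right_s11 y hp
        obtain ⟨q', h1, h2, h3⟩ := hinv p hpv hppos
        have hple : p + w.length ≤ (x ++ w).length := occ_len hp
        refine ⟨q', occ_prefix (by rw [← hvdef]; exact h1) (by omega), h2, h3⟩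
      obtain ⟨S, hS, hSeq⟩ := ih (x ++ w) (by omega) ⟨x, rfl⟩ hinv'
      refine ⟨S ++ [y], ?_, ?_⟩
      · intro c hc
        rcases List.mem_append.mp hc with h | h
        · exact hS c h
        · simp at h; rw [h]; exact hy_corr
      · rw [hvdef, hSeq]
        simp

lemma bwd_main {α : Type*} (w : List α) (hw : w ≠ []) :
    ∀ S : List (List α), (∀ c ∈ S, c ∈ CorrPos w) →
    (∃ u, w ++ S.flatten = u ++ w) ∧
    ∀ i, i + 1 < (w ++ S.flatten).length →
      ∃ j, occursAt w (w ++ S.flatten) j ∧ j ≤ i ∧ i + 1 < j + w.length := by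
  have hwlen : 0 < w.length := List.length_pos_iff.mpr hw
  intro S
  induction S using List.reverseRecOn with
  | nil =>
    intro _
    refine ⟨⟨[], by simp⟩, ?_⟩
    intro i hi
    simp at hi
    exact ⟨0, ⟨[], [], by simp, rfl⟩, Nat.zero_le _, by simpa using hi⟩
  | append_singleton S c ihS =>
    intro hS
    obtain ⟨⟨hclen, e, hce⟩, hcne⟩ := hS c (by simp)
    obtain ⟨⟨t, ht⟩, hcov⟩ := ihS (fun x hx => hS x (by simp [hx]))
    have hveq : w ++ (S ++ [c]).flatten = (w ++ S.flatten) ++ c := by simp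
    have helen : e.length = c.length := by
      have := congrArg List.length hce; simp at this; omega
    have htlen : (w ++ S.flatten).length = t.length + w.length := by
      rw [ht]; simp
    constructor
    · refine ⟨t ++ e, ?_⟩
      rw [hveq, ht, List.append_assoc, hce, ← List.append_assoc]
    · intro i hi
      rw [hveq] at hi ⊢
      by_cases hcase : i + 1 < (w ++ S.flatten).length
      · obtain ⟨j, hj, hji, hjc⟩ := hcov i hcase
        exact ⟨j, occ_append_right_s11 c hj, hji, hjc⟩
      · rw [List.length_append, htlen] at hi
        rw [htlen] at hcase
        refine ⟨t.length + e.length, ⟨t ++ e, [], ?_, by simp⟩, by omega, by omega⟩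
        rw [ht, List.append_assoc, hce, ← List.append_assoc]; simp

/-- `v` is a clustering-word for `w` (i.e. `w` occurs in `v` and any
two consecutive positions of `v` are covered by a common occurrence of `w`)
iff `v ∈ {w}·(C∘(w))*`. -/
theorem clusteringWord_iff {α : Type*} (w : List α) (hw : w ≠ []) (v : List α) :
    ((∃ i, occursAt w v i) ∧
      ∀ i, i + 1 < v.length →
        ∃ j, occursAt w v j ∧ j ≤ i ∧ i + 1 < j + w.length) ↔
    v ∈ lconc {w} (lstar (CorrPos w)) := by
  constructor
  · rintro ⟨⟨i, hi⟩, hcov⟩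
    have hwlen : 0 < w.length := List.length_pos_iff.mpr hw
    have hilen := occ_len hi
    have hend : ∃ u, v = u ++ w := by
      by_cases hvw : v.length = w.length
      · obtain ⟨x, y, hv2, hx⟩ := hi
        have hl := congrArg List.length hv2
        simp at hl
        have hx0 : x = [] := List.length_eq_zero_iff.mp (by omega)
        have hy0 : y = [] := List.length_eq_zero_iff.mp (by omega)
        exact ⟨[], by simp [hv2, hx0, hy0]⟩
      · have h2 : w.length < v.length := by omega
        obtain ⟨j, hj, hji, hjc⟩ := hcov (v.length - 2) (by omega)
        have hjlen := occ_len hj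
        obtain ⟨x, y, hv2, hx⟩ := hj
        have hl := congrArg List.length hv2
        simp at hl
        have hy0 : y = [] := List.length_eq_zero_iff.mp (by omega)
        exact ⟨x, by simpa [hy0] using hv2⟩
    have hinv : ∀ j, occursAt w v j → 0 < j →
        ∃ q, occursAt w v q ∧ q < j ∧ j < q + w.length := by
      intro j hj hjpos
      have hjlen := occ_len hj
      obtain ⟨q, hq, hq1, hq2⟩ := hcov (j - 1) (by omega)
      exact ⟨q, hq, by omega, by omega⟩
    obtain ⟨S, hS, hSeq⟩ := fwd_main w hw v.length v le_rfl hend hinv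
    exact ⟨w, rfl, S.flatten, ⟨S, hS, rfl⟩, hSeq⟩
  · rintro ⟨a, rfl, b, ⟨S, hS, rfl⟩, rfl⟩
    obtain ⟨_, hcov⟩ := bwd_main a hw S hS
    exact ⟨⟨0, ⟨[], S.flatten, by simp, rfl⟩⟩, hcov⟩
end
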